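/- arXiv:0812.1724 — 5 statements merged into one kernel-verified Lean document; each statement's English description precedes it below -/
import Mathlib

section
/- Let n be a positive even integer, let a_1, ..., a_n be integers satisfying a_1 + ... + a_n ≡ 0 (mod n), and let w_1, ..., w_n be integers forming an arithmetic progression whose common difference is even (i.e., w_k = c + (k-1)·d for some integers c and d with d even). Then there exists a permutation σ of {1, ..., n} such that ∑_{k=1}^n w_k·a_{σ(k)} ≡ 0 (mod n). -/
lemma sum_pair (F : ℕ → ℤ) (m : ℕ) :
    ∑ i ∈ Finset.range (2*m), F i = ∑ j ∈ Finset.range m, (F (2*j) + F (2*j+1)) := by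
  induction m with
  | zero => simp
  | succ m ih =>
    have h2 : 2*(m+1) = (2*m+1)+1 := by ring
    rw [h2, Finset.sum_range_succ, Finset.sum_range_succ, ih, Finset.sum_range_succ]
    ring

lemma sum_interleave (g : ℕ → ℤ) (m : ℕ) :
    ∑ j ∈ Finset.range (m+1), g (2*j) + ∑ j ∈ Finset.range m, g (2*j+1)
      = ∑ i ∈ Finset.range (2*m+1), g i := by
  induction m with
  | zero => simp
  | succ m ih =>
    rw [show 2*(m+1)+1 = ((2*m+1)+1)+1 from by ring, Finset.sum_range_succ g,
      Finset.sum_range_succ g, ← ih, Finset.sum_range_succ (fun j => g (2*j+1)) m,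
      Finset.sum_range_succ (fun j => g (2*j)) (m+1)]
    simp only [show 2*(m+1) = 2*m+1+1 from by ring]
    ring

lemma intCast_emod_zmod (x : ℤ) (m : ℕ) : ((x % (m:ℤ) : ℤ) : ZMod m) = (x : ZMod m) := by
  rw [Int.emod_def]
  push_cast
  simp [ZMod.natCast_self]

lemma coreδ (m : ℕ) (hm : 0 < m) (δ : ℕ → ℤ)
    (hδ0 : ∀ j, 0 ≤ δ j) (hδlt : ∀ j, δ j < (m:ℤ))
    (hD2 : 2 * (∑ j ∈ Finset.range m, δ j) ≤ (m:ℤ))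
    (hpar : Even (∑ j ∈ Finset.range m, δ j) ∨ Odd m) :
    ∃ u : Fin m → ZMod m, Function.Bijective u ∧
      ∑ j : Fin m, u j * ((δ j.val : ℤ) : ZMod m) = 0 := by
  classical
  haveI : NeZero m := ⟨hm.ne'⟩
  set D : ℤ := ∑ j ∈ Finset.range m, δ j with hDdef
  have hD0 : 0 ≤ D := Finset.sum_nonneg fun j _ => hδ0 j
  set t : ℤ := if Even D then 0 else (m:ℤ) with htdef
  have htm : t = 0 ∨ t = (m:ℤ) := by rw [htdef]; split_ifs <;> simp
  have hEtD : Even (t - D) := by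
    by_cases hE : Even D
    · rw [htdef, if_pos hE, zero_sub]
      exact hE.neg
    · have hOm : Odd m := hpar.resolve_left hE
      rw [htdef, if_neg hE]
      have hOD : Odd D := Int.not_even_iff_odd.1 hE
      have hOmZ : Odd (m:ℤ) := by exact_mod_cast hOm
      exact hOmZ.sub_odd hOD
  obtain ⟨c, hc⟩ := hEtD
  set P : ℕ → ℤ := fun k => ∑ i ∈ Finset.range k, δ i with hPdef
  have hPstep : ∀ k, P (k+1) = P k + δ k := fun k => Finset.sum_range_succ δ k
  have hPmono : ∀ {i j : ℕ}, i ≤ j → P i ≤ P j := by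
    intro i j hij
    exact Finset.sum_le_sum_of_subset_of_nonneg (Finset.range_subset_range.2 hij)
      (fun k _ _ => hδ0 k)
  have hP0 : ∀ k, 0 ≤ P k := fun k => Finset.sum_nonneg fun i _ => hδ0 i
  have hPD : P m = D := by rw [hPdef]
  have hP0z : P 0 = 0 := by simp [hPdef]
  set v : ℕ → ℤ := fun j => P j + P (j+1) + (c + c) with hvdef
  have hkey : ∑ j ∈ Finset.range m, v j * δ j = D * t := by
    have h1 : ∀ j ∈ Finset.range m,
        v j * δ j = ((fun k => P k ^ 2) (j+1) - (fun k => P k ^ 2) j) + (c+c) * δ j := by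
      intro j _
      have hd : δ j = P (j+1) - P j := by rw [hPstep]; ring
      rw [hvdef]
      simp only []
      rw [hd]
      ring
    rw [Finset.sum_congr rfl h1, Finset.sum_add_distrib,
      Finset.sum_range_sub (fun k => P k ^ 2), ← Finset.mul_sum, ← hDdef]
    simp only [hPD, hP0z]
    linear_combination (-D) * hc
  -- bounds for injectivity
  have hvbound : ∀ i j : ℕ, i < j → j < m → δ i ≠ 0 → δ j ≠ 0 →
      0 < v j - v i ∧ v j - v i < (m:ℤ) := by
    intro i j hij hjm hi hj
    have h1 : 1 ≤ δ i := by have := hδ0 i; omega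
    have h2 : 1 ≤ δ j := by have := hδ0 j; omega
    have hPij : P i ≤ P j := hPmono (le_of_lt hij)
    have hPij1 : P (i+1) ≤ P j := hPmono (by omega)
    have hPjD : P (j+1) ≤ D := by rw [← hPD]; exact hPmono (by omega)
    have hstepj := hPstep j
    have hstepi := hPstep i
    have h0i : 0 ≤ P i := hP0 i
    constructor
    · simp only [hvdef]; linarith
    · simp only [hvdef]; linarith
  have hfne : ∀ i j : Fin m, (i:ℕ) < (j:ℕ) → δ i ≠ 0 → δ j ≠ 0 →
      ((v i : ℤ) : ZMod m) ≠ ((v j : ℤ) : ZMod m) := by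
    intro i j hij hi hj heq
    obtain ⟨hgt, hlt⟩ := hvbound i j hij j.isLt hi hj
    have hz : ((v (j:ℕ) - v (i:ℕ) : ℤ) : ZMod m) = 0 := by
      push_cast
      rw [heq]; ring
    have hdvd : (m:ℤ) ∣ (v (j:ℕ) - v (i:ℕ)) := (ZMod.intCast_zmod_eq_zero_iff_dvd _ m).1 hz
    have := Int.le_of_dvd hgt hdvd
    linarith
  set S : Finset (Fin m) := Finset.univ.filter (fun j : Fin m => δ (j:ℕ) ≠ 0) with hSdef
  set fj : Fin m → ZMod m := fun j => ((v (j:ℕ) : ℤ) : ZMod m) with hfjdef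
  have hfInj : Set.InjOn fj S := by
    intro x hx y hy hxy
    have hx' : δ (x:ℕ) ≠ 0 := by
      have := Finset.mem_coe.1 hx; rw [hSdef] at this; simpa using this
    have hy' : δ (y:ℕ) ≠ 0 := by
      have := Finset.mem_coe.1 hy; rw [hSdef] at this; simpa using this
    rcases lt_trichotomy (x:ℕ) (y:ℕ) with h|h|h
    · exact absurd hxy (hfne x y h hx' hy')
    · exact Fin.ext h
    · exact absurd hxy.symm (hfne y x h hy' hx')
  have hcard : Fintype.card (Sᶜ : Finset (Fin m)) = Fintype.card ((S.image fj)ᶜ : Finset (ZMod m)) := by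
    rw [Fintype.card_coe, Fintype.card_coe, Finset.card_compl, Finset.card_compl,
      Finset.card_image_of_injOn hfInj]
    simp [ZMod.card]
  set e := Fintype.equivOfCardEq hcard with hedef
  set u : Fin m → ZMod m := fun j =>
    if h : j ∈ S then fj j else (e ⟨j, Finset.mem_compl.2 h⟩ : ZMod m) with hudef
  have hu : ∀ j : Fin m, δ (j:ℕ) ≠ 0 → u j = fj j := by
    intro j hj
    have hjS : j ∈ S := by rw [hSdef]; simp [hj]
    rw [hudef]; simp [hjS]
  have huInj : Function.Injective u := by
    intro x y hxy
    by_cases hx : x ∈ S <;> by_cases hy : y ∈ S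
    · rw [hudef] at hxy; simp only [dif_pos hx, dif_pos hy] at hxy
      exact hfInj (Finset.mem_coe.2 hx) (Finset.mem_coe.2 hy) hxy
    · exfalso
      rw [hudef] at hxy; simp only [dif_pos hx, dif_neg hy] at hxy
      have h1 : fj x ∈ S.image fj := Finset.mem_image_of_mem _ hx
      have h2 := (e ⟨y, Finset.mem_compl.2 hy⟩).2
      rw [← hxy] at h2
      exact (Finset.mem_compl.1 h2) h1
    · exfalso
      rw [hudef] at hxy; simp only [dif_neg hx, dif_pos hy] at hxy
      have h1 : fj y ∈ S.image fj := Finset.mem_image_of_mem _ hy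
      have h2 := (e ⟨x, Finset.mem_compl.2 hx⟩).2
      rw [hxy] at h2
      exact (Finset.mem_compl.1 h2) h1
    · rw [hudef] at hxy; simp only [dif_neg hx, dif_neg hy] at hxy
      have := e.injective (Subtype.ext hxy)
      simpa using congrArg Subtype.val this
  have hbij : Function.Bijective u := by
    rw [Fintype.bijective_iff_injective_and_card]
    exact ⟨huInj, by simp [ZMod.card]⟩
  refine ⟨u, hbij, ?_⟩
  have hsum1 : ∑ j : Fin m, u j * ((δ (j:ℕ) : ℤ) : ZMod m)
      = ∑ j : Fin m, fj j * ((δ (j:ℕ) : ℤ) : ZMod m) := by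
    apply Finset.sum_congr rfl
    intro j _
    by_cases hj : δ (j:ℕ) = 0
    · simp [hj]
    · rw [hu j hj]
  rw [hsum1]
  have hsum2 : ∑ j : Fin m, fj j * ((δ (j:ℕ) : ℤ) : ZMod m)
      = ((∑ j ∈ Finset.range m, v j * δ j : ℤ) : ZMod m) := by
    rw [Fin.sum_univ_eq_sum_range (fun j => ((v j : ℤ) : ZMod m) * ((δ j : ℤ) : ZMod m)) m]
    push_cast
    rfl
  rw [hsum2, hkey]
  rcases htm with h|h <;> rw [h]
  · simp
  · push_cast
    simp

lemma coreB (m : ℕ) (hm : 0 < m) (b : ℕ → ℤ)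
    (hD2 : 2 * (∑ j ∈ Finset.range m, (b (2*j+1) - b (2*j)) % (m:ℤ)) ≤ (m:ℤ))
    (hpar : Even (∑ j ∈ Finset.range m, (b (2*j+1) - b (2*j)) % (m:ℤ)) ∨ Odd m) :
    ∃ Wn : ℕ → ℕ, (∀ i, Wn i < 2*m) ∧
      (∀ i j, i < 2*m → j < 2*m → Wn i = Wn j → i = j) ∧
      (m:ℤ) ∣ ∑ i ∈ Finset.range (2*m), (Wn i : ℤ) * b i := by
  haveI : NeZero m := ⟨hm.ne'⟩
  have hmz : (m:ℤ) ≠ 0 := by exact_mod_cast hm.ne'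
  have hmpos : (0:ℤ) < m := by exact_mod_cast hm
  obtain ⟨u, hubij, husum⟩ := coreδ m hm (fun j => (b (2*j+1) - b (2*j)) % (m:ℤ))
    (fun j => Int.emod_nonneg _ hmz) (fun j => Int.emod_lt_of_pos _ hmpos) hD2 hpar
  set δ : ℕ → ℤ := fun j => (b (2*j+1) - b (2*j)) % (m:ℤ) with hδdef
  set un : ℕ → ZMod m := fun j => u ⟨j % m, Nat.mod_lt j hm⟩ with hundef
  set Wn : ℕ → ℕ := fun i => if i % 2 = 1 then (un (i/2)).val else (- un (i/2)).val + m
    with hWdef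
  have hWlt : ∀ i, Wn i < 2*m := by
    intro i
    simp only [hWdef]
    split_ifs
    · have := ZMod.val_lt (un (i/2)); omega
    · have := ZMod.val_lt (- un (i/2)); omega
  have huninj : ∀ i j, i < m → j < m → un i = un j → i = j := by
    intro i j hi hj hij
    rw [hundef] at hij
    have h2 := hubij.1 hij
    have e1 : i % m = i := Nat.mod_eq_of_lt hi
    have e2 : j % m = j := Nat.mod_eq_of_lt hj
    have h3 : i % m = j % m := congrArg Fin.val h2
    omega
  have hWinj : ∀ i j, i < 2*m → j < 2*m → Wn i = Wn j → i = j := by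
    intro i j hi hj hij
    simp only [hWdef] at hij
    have hv1 := ZMod.val_lt (un (i/2))
    have hv2 := ZMod.val_lt (un (j/2))
    have hv3 := ZMod.val_lt (-un (i/2))
    have hv4 := ZMod.val_lt (-un (j/2))
    by_cases p1 : i % 2 = 1 <;> by_cases p2 : j % 2 = 1
    · simp only [if_pos p1, if_pos p2] at hij
      have h1 := ZMod.val_injective m hij
      have h2 := huninj (i/2) (j/2) (by omega) (by omega) h1
      omega
    · simp only [if_pos p1, if_neg p2] at hij
      omega
    · simp only [if_neg p1, if_pos p2] at hij
      omega
    · simp only [if_neg p1, if_neg p2] at hij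
      have h1 := ZMod.val_injective m (by omega : (-un (i/2)).val = (-un (j/2)).val)
      have h2 := neg_injective h1
      have h3 := huninj (i/2) (j/2) (by omega) (by omega) h2
      omega
  have hsument : ∑ j ∈ Finset.range m, un j * ((δ j : ℤ) : ZMod m) = 0 := by
    rw [← Fin.sum_univ_eq_sum_range (fun j => un j * ((δ j : ℤ) : ZMod m)) m]
    rw [← husum]
    apply Finset.sum_congr rfl
    intro j _
    congr 2
    simp only [hundef]
    congr 1
    apply Fin.ext
    simpa using Nat.mod_eq_of_lt j.isLt
  refine ⟨Wn, hWlt, hWinj, ?_⟩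
  rw [← ZMod.intCast_zmod_eq_zero_iff_dvd, sum_pair]
  rw [Int.cast_sum]
  have hterm : ∀ j ∈ Finset.range m,
      (((Wn (2*j) : ℤ) * b (2*j) + (Wn (2*j+1) : ℤ) * b (2*j+1) : ℤ) : ZMod m)
        = un j * ((δ j : ℤ) : ZMod m) := by
    intro j hj
    have h2j : ¬ ((2*j) % 2 = 1) := by omega
    have h2j1 : (2*j+1) % 2 = 1 := by omega
    have hdiv : (2*j)/2 = j := by omega
    have hdiv1 : (2*j+1)/2 = j := by omega
    simp only [hWdef, if_neg h2j, if_pos h2j1, hdiv, hdiv1]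
    push_cast
    rw [ZMod.natCast_val, ZMod.natCast_val, ZMod.cast_id, ZMod.cast_id, ZMod.natCast_self]
    rw [hδdef]
    simp only []
    rw [intCast_emod_zmod]
    push_cast
    ring
  rw [Finset.sum_congr rfl hterm, hsument]

lemma par_lemma (m : ℕ) (h2 : 2 ∣ m) (b : ℕ → ℤ)
    (hEb : Even (∑ i ∈ Finset.range (2*m), b i)) :
    Even (∑ j ∈ Finset.range m, (b (2*j+1) - b (2*j)) % (m:ℤ)) := by
  have h2z : (2:ℤ) ∣ (m:ℤ) := by exact_mod_cast h2
  have key : Even ((∑ j ∈ Finset.range m, (b (2*j+1) - b (2*j)) % (m:ℤ))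
      - ∑ i ∈ Finset.range (2*m), b i) := by
    rw [sum_pair b m, ← Finset.sum_sub_distrib]
    apply Finset.even_sum
    intro j _
    have e1 : (b (2*j+1) - b (2*j)) % (m:ℤ) % 2 = (b (2*j+1) - b (2*j)) % 2 :=
      Int.emod_emod_of_dvd _ h2z
    rw [Int.even_sub, Int.even_iff, Int.even_iff]
    set z := (b (2*j+1) - b (2*j)) % (m:ℤ) with hz
    set x := b (2*j) with hx
    set y := b (2*j+1) with hy
    omega
  exact (Int.even_sub.1 key).2 hEb

/-- Let `n` be a positive even integer, let `a_1, ..., a_n` be integers with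
`a_1 + ... + a_n ≡ 0 (mod n)`, and let `w_1, ..., w_n` be an arithmetic progression
with even common difference, i.e. `w_k = c + (k-1)·d` with `d` even (here indexed
by `Fin n`, so `w k = c + k·d`).  Then some permutation `σ` of `{1, ..., n}` satisfies
`∑_{k=1}^n w_k·a_{σ(k)} ≡ 0 (mod n)`. -/
theorem stmt_1 (n : ℕ) (hn : 0 < n) (hne : Even n) (a w : Fin n → ℤ)
    (ha : (n : ℤ) ∣ ∑ k : Fin n, a k)
    (c d : ℤ) (hd : Even d) (hw : ∀ k : Fin n, w k = c + (k : ℤ) * d) :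
    ∃ σ : Equiv.Perm (Fin n),
      (n : ℤ) ∣ ∑ k : Fin n, w k * a (σ k) := by
  classical
  obtain ⟨m, hm2⟩ := hne
  have hm2' : n = 2 * m := by omega
  subst hm2'
  have hm : 0 < m := by omega
  have h2m : 0 < 2*m := by omega
  -- Step A: reduce to divisibility by m of the k-weighted sum
  suffices h : ∃ σ : Equiv.Perm (Fin (2*m)), (m:ℤ) ∣ ∑ k : Fin (2*m), ((k:ℕ) : ℤ) * a (σ k) by
    obtain ⟨σ, hσ⟩ := h
    refine ⟨σ, ?_⟩
    have hsplit : ∑ k : Fin (2*m), w k * a (σ k)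
        = c * (∑ k : Fin (2*m), a (σ k)) + d * (∑ k : Fin (2*m), ((k:ℕ):ℤ) * a (σ k)) := by
      rw [Finset.mul_sum, Finset.mul_sum, ← Finset.sum_add_distrib]
      apply Finset.sum_congr rfl
      intro k _
      rw [hw k]
      push_cast
      ring
    rw [hsplit]
    apply dvd_add
    · rw [Equiv.sum_comp σ a]
      exact Dvd.dvd.mul_left ha c
    · obtain ⟨e, he⟩ := hd
      obtain ⟨q, hq⟩ := hσ
      refine ⟨e * q, ?_⟩
      rw [hq, he]
      push_cast
      ring
  -- sorting
  set ρ : Equiv.Perm (Fin (2*m)) := Tuple.sort (fun i => a i % (m:ℤ)) with hρdef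
  have hmono : Monotone ((fun i => a i % (m:ℤ)) ∘ ρ) := Tuple.monotone_sort _
  set g : ℕ → ℤ := fun i => a (ρ ⟨i % (2*m), Nat.mod_lt _ h2m⟩) with hgdef
  set s : ℕ → ℤ := fun i => g i % (m:ℤ) with hsdef
  have hmz : (m:ℤ) ≠ 0 := by exact_mod_cast hm.ne'
  have hmpos : (0:ℤ) < (m:ℤ) := by exact_mod_cast hm
  have hs0 : ∀ i, 0 ≤ s i := fun i => Int.emod_nonneg _ hmz
  have hslt : ∀ i, s i < m := fun i => Int.emod_lt_of_pos _ hmpos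
  have hmk : ∀ i : Fin (2*m), (⟨(i:ℕ) % (2*m), Nat.mod_lt _ h2m⟩ : Fin (2*m)) = i :=
    fun i => Fin.ext (by simpa using Nat.mod_eq_of_lt i.isLt)
  have hsmono : ∀ i j : ℕ, i ≤ j → j < 2*m → s i ≤ s j := by
    intro i j hij hj
    have h1 : (⟨i % (2*m), Nat.mod_lt _ h2m⟩ : Fin (2*m)) ≤ ⟨j % (2*m), Nat.mod_lt _ h2m⟩ := by
      rw [Fin.mk_le_mk]
      have e1 : i % (2*m) = i := Nat.mod_eq_of_lt (by omega)
      have e2 : j % (2*m) = j := Nat.mod_eq_of_lt hj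
      omega
    exact hmono h1
  -- gaps
  set gg : ℕ → ℤ := fun i => s (i+1) - s i with hggdef
  have hgg0 : ∀ i, i + 1 < 2*m → 0 ≤ gg i := by
    intro i hi
    have := hsmono i (i+1) (by omega) hi
    simp only [hggdef]
    linarith
  set DA : ℤ := ∑ j ∈ Finset.range m, (g (2*j+1) - g (2*j)) % (m:ℤ) with hDAdef
  set DB : ℤ := ∑ j ∈ Finset.range m, (g (2*j+1+1) - g (2*j+1)) % (m:ℤ) with hDBdef
  -- identify DA terms with gaps
  have hgap : ∀ x : ℕ, x + 1 < 2*m → (g (x+1) - g x) % (m:ℤ) = gg x := by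
    intro x hx
    rw [Int.sub_emod]
    have hx1 : g (x+1) % (m:ℤ) = s (x+1) := rfl
    have hx2 : g x % (m:ℤ) = s x := rfl
    rw [hx1, hx2]
    have h0 : 0 ≤ s (x+1) - s x := by have := hsmono x (x+1) (by omega) hx; linarith
    have h1 : s (x+1) - s x < (m:ℤ) := by have := hslt (x+1); have := hs0 x; linarith
    rw [Int.emod_eq_of_lt h0 h1]
  have hDA : DA = ∑ j ∈ Finset.range m, gg (2*j) := by
    rw [hDAdef]
    apply Finset.sum_congr rfl
    intro j hj
    rw [Finset.mem_range] at hj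
    exact hgap (2*j) (by omega)
  have hDA0 : 0 ≤ DA := by
    rw [hDA]
    apply Finset.sum_nonneg
    intro j hj
    rw [Finset.mem_range] at hj
    exact hgg0 _ (by omega)
  have hDB0 : 0 ≤ DB := by
    rw [hDBdef]
    apply Finset.sum_nonneg
    intro j _
    exact Int.emod_nonneg _ hmz
  -- telescoping bound
  have hTEL : DA + DB ≤ (m:ℤ) := by
    obtain ⟨k, hk⟩ : ∃ k, m = k + 1 := ⟨m - 1, by omega⟩
    -- split last term of DB
    have hDBsplit : DB = (∑ j ∈ Finset.range k, gg (2*j+1))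
        + (g (2*k+1+1) - g (2*k+1)) % (m:ℤ) := by
      rw [hDBdef, show Finset.range m = Finset.range (k+1) from by rw [hk],
        Finset.sum_range_succ]
      congr 1
      apply Finset.sum_congr rfl
      intro j hj
      rw [Finset.mem_range] at hj
      exact hgap (2*j+1) (by omega)
    -- last term of DB : the wrap
    have hg2m : g (2*k+1+1) = g 0 := by
      have : 2*k+1+1 = 2*m := by omega
      rw [this]
      simp only [hgdef]
      congr 1
      apply Fin.ext
      simp [Nat.mod_self]
    have hwrap : (g (2*k+1+1) - g (2*k+1)) % (m:ℤ) ≤ (m:ℤ) - (s (2*k+1) - s 0) := by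
      rw [hg2m, Int.sub_emod]
      have hx1 : g 0 % (m:ℤ) = s 0 := rfl
      have hx2 : g (2*k+1) % (m:ℤ) = s (2*k+1) := rfl
      rw [hx1, hx2]
      set E : ℤ := s (2*k+1) - s 0 with hE
      have hE0 : 0 ≤ E := by
        have := hsmono 0 (2*k+1) (by omega) (by omega)
        simp only [hE]; linarith
      have hElt : E < (m:ℤ) := by
        have := hslt (2*k+1); have := hs0 0
        simp only [hE]; linarith
      have hse : s 0 - s (2*k+1) = -E := by simp only [hE]; ring
      rw [hse]
      by_cases hE0' : E = 0
      · rw [hE0']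
        simp
      · have h1 : (-E) % (m:ℤ) = ((m:ℤ) - E) % (m:ℤ) := by
          conv_lhs => rw [show -E = ((m:ℤ) - E) + (m:ℤ)*(-1) from by ring]
          rw [Int.add_mul_emod_self_left]
        rw [h1, Int.emod_eq_of_lt (by omega) (by omega)]
    -- telescoping
    have htel2 : (∑ j ∈ Finset.range (k+1), gg (2*j)) + (∑ j ∈ Finset.range k, gg (2*j+1))
        = s (2*k+1) - s 0 := by
      rw [sum_interleave gg k]
      simp only [hggdef]
      exact Finset.sum_range_sub (fun i => s i) (2*k+1)
    have hmk1 : ∑ j ∈ Finset.range m, gg (2*j) = ∑ j ∈ Finset.range (k+1), gg (2*j) := by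
      rw [hk]
    rw [hDA, hDBsplit]
    linarith [hwrap, htel2, hmk1]
  -- sums of b over full range relate to ∑ a
  have hEsa : Even (∑ k : Fin (2*m), a k) := by
    obtain ⟨q, hq⟩ := ha
    refine ⟨(m:ℤ) * q, ?_⟩
    rw [hq]; push_cast; ring
  have hsumA : ∑ i ∈ Finset.range (2*m), g i = ∑ k : Fin (2*m), a k := by
    rw [← Fin.sum_univ_eq_sum_range g (2*m)]
    rw [← Equiv.sum_comp ρ a]
    apply Finset.sum_congr rfl
    intro i _
    simp only [hgdef, hmk]
  have hsumB : ∑ i ∈ Finset.range (2*m), g (i+1) = ∑ k : Fin (2*m), a k := by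
    have h1 : ∑ i ∈ Finset.range (2*m+1), g i
        = (∑ i ∈ Finset.range (2*m), g (i+1)) + g 0 := Finset.sum_range_succ' g (2*m)
    have h2 : ∑ i ∈ Finset.range (2*m+1), g i = (∑ i ∈ Finset.range (2*m), g i) + g (2*m) :=
      Finset.sum_range_succ g (2*m)
    have h3 : g (2*m) = g 0 := by
      simp only [hgdef]
      congr 1
      apply Fin.ext
      simp [Nat.mod_self]
    rw [← hsumA]
    omega
  -- parity
  have hparA : Even DA ∨ Odd m := by
    rcases Nat.even_or_odd m with he|ho
    · left
      rw [hDAdef]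
      exact par_lemma m he.two_dvd g (by rw [hsumA]; exact hEsa)
    · right; exact ho
  have hparB : Even DB ∨ Odd m := by
    rcases Nat.even_or_odd m with he|ho
    · left
      rw [hDBdef]
      exact par_lemma m he.two_dvd (fun i => g (i+1)) (by rw [hsumB]; exact hEsa)
    · right; exact ho
  -- choose phase
  by_cases hph : 2 * DA ≤ (m:ℤ)
  case pos =>
    obtain ⟨Wn, hWlt, hWinj, hWdvd⟩ := coreB m hm g (by rw [← hDAdef]; exact hph)
      (by rw [← hDAdef]; exact hparA)
    set WF : Fin (2*m) → Fin (2*m) := fun i => ⟨Wn i.1, hWlt i.1⟩ with hWF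
    have hWFinj : Function.Injective WF := by
      intro x y hxy
      apply Fin.ext
      exact hWinj _ _ x.isLt y.isLt (congrArg Fin.val hxy)
    have hWFbij := Finite.injective_iff_bijective.1 hWFinj
    refine ⟨(Equiv.ofBijective WF hWFbij).symm.trans ρ, ?_⟩
    set WE := Equiv.ofBijective WF hWFbij with hWE
    rw [← Equiv.sum_comp WE (fun k => ((k:ℕ):ℤ) * a ((WE.symm.trans ρ) k))]
    have hterm : ∀ i : Fin (2*m),
        (((WE i : Fin (2*m)):ℕ):ℤ) * a ((WE.symm.trans ρ) (WE i)) = (Wn i.1 : ℤ) * g i.1 := by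
      intro i
      have h1 : (WE.symm.trans ρ) (WE i) = ρ i := by simp
      rw [h1]
      have h2 : ((WE i : Fin (2*m)):ℕ) = Wn i.1 := rfl
      rw [h2]
      congr 1
      simp only [hgdef, hmk]
    rw [Finset.sum_congr rfl (fun i _ => hterm i)]
    rw [Fin.sum_univ_eq_sum_range (fun i => (Wn i : ℤ) * g i) (2*m)]
    exact hWdvd
  case neg =>
    have hphB : 2 * DB ≤ (m:ℤ) := by linarith
    obtain ⟨Wn, hWlt, hWinj, hWdvd⟩ := coreB m hm (fun i => g (i+1))
      (by rw [← hDBdef]; exact hphB) (by rw [← hDBdef]; exact hparB)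
    set WF : Fin (2*m) → Fin (2*m) := fun i => ⟨Wn i.1, hWlt i.1⟩ with hWF
    have hWFinj : Function.Injective WF := by
      intro x y hxy
      apply Fin.ext
      exact hWinj _ _ x.isLt y.isLt (congrArg Fin.val hxy)
    have hWFbij := Finite.injective_iff_bijective.1 hWFinj
    -- rotation
    set rotf : Fin (2*m) → Fin (2*m) := fun q => ⟨(q.1+1) % (2*m), Nat.mod_lt _ h2m⟩
      with hrotf
    have hrotinj : Function.Injective rotf := by
      intro x y hxy
      have hx := x.isLt; have hy := y.isLt
      have h1 : (x.1+1) % (2*m) = (y.1+1) % (2*m) := congrArg Fin.val hxy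
      have hc1 : (x.1+1) % (2*m) = if x.1+1 = 2*m then 0 else x.1+1 := by
        split_ifs with h
        · rw [h, Nat.mod_self]
        · exact Nat.mod_eq_of_lt (by omega)
      have hc2 : (y.1+1) % (2*m) = if y.1+1 = 2*m then 0 else y.1+1 := by
        split_ifs with h
        · rw [h, Nat.mod_self]
        · exact Nat.mod_eq_of_lt (by omega)
      apply Fin.ext
      rw [hc1, hc2] at h1
      split_ifs at h1 <;> omega
    have hrotbij := Finite.injective_iff_bijective.1 hrotinj
    set rotE := Equiv.ofBijective rotf hrotbij with hrotE
    refine ⟨(Equiv.ofBijective WF hWFbij).symm.trans (rotE.trans ρ), ?_⟩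
    set WE := Equiv.ofBijective WF hWFbij with hWE
    rw [← Equiv.sum_comp WE (fun k => ((k:ℕ):ℤ) * a ((WE.symm.trans (rotE.trans ρ)) k))]
    have hterm : ∀ i : Fin (2*m),
        (((WE i : Fin (2*m)):ℕ):ℤ) * a ((WE.symm.trans (rotE.trans ρ)) (WE i))
          = (Wn i.1 : ℤ) * g (i.1+1) := by
      intro i
      have h1 : (WE.symm.trans (rotE.trans ρ)) (WE i) = ρ (rotf i) := by simp [hrotE]
      rw [h1]
      have h2 : ((WE i : Fin (2*m)):ℕ) = Wn i.1 := rfl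
      rw [h2]
    rw [Finset.sum_congr rfl (fun i _ => hterm i)]
    rw [Fin.sum_univ_eq_sum_range (fun i => (Wn i : ℤ) * g (i+1)) (2*m)]
    exact hWdvd
end

section
/- Let n = m·q where m and q are positive integers with m ≥ 2, let d be a positive divisor of q, and let a_1, ..., a_n be integers. Then there exists a partition I_1, ..., I_m of {1, ..., n} such that for each s = 1, ..., m the set I_s has exactly q elements, and whenever d divides ∑_{i ∈ I_s} a_i, all the integers a_i with i ∈ I_s are pairwise congruent modulo d. -/
private lemma pick3 {d s1 s2 s3 T : ℤ} (h12 : ¬ d ∣ s1 - s2) (h13 : ¬ d ∣ s1 - s3)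
    (h23 : ¬ d ∣ s2 - s3) :
    (¬ d ∣ s1 ∧ ¬ d ∣ T - s1) ∨ (¬ d ∣ s2 ∧ ¬ d ∣ T - s2) ∨
    (¬ d ∣ s3 ∧ ¬ d ∣ T - s3) := by
  by_contra h
  push_neg at h
  obtain ⟨h1, h2, h3⟩ := h
  by_cases a1 : d ∣ s1
  · by_cases a2 : d ∣ s2
    · exact h12 (dvd_sub a1 a2)
    · have b2 := h2 a2
      by_cases a3 : d ∣ s3
      · exact h13 (dvd_sub a1 a3)
      · have b3 := h3 a3
        have h' := dvd_sub b2 b3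
        rw [show (T - s2) - (T - s3) = -(s2 - s3) by ring] at h'
        exact h23 (dvd_neg.mp h')
  · have b1 := h1 a1
    by_cases a2 : d ∣ s2
    · by_cases a3 : d ∣ s3
      · exact h23 (dvd_sub a2 a3)
      · have b3 := h3 a3
        have h' := dvd_sub b1 b3
        rw [show (T - s1) - (T - s3) = -(s1 - s3) by ring] at h'
        exact h13 (dvd_neg.mp h')
    · have b2 := h2 a2
      have h' := dvd_sub b1 b2
      rw [show (T - s1) - (T - s2) = -(s1 - s2) by ring] at h'
      exact h12 (dvd_neg.mp h')

private def GoodB {n : ℕ} (d : ℕ) (a : Fin n → ℤ) (B : Finset (Fin n)) : Prop :=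
  ((d : ℤ) ∣ ∑ i ∈ B, a i) → ∀ i ∈ B, ∀ j ∈ B, (d : ℤ) ∣ a i - a j

private lemma goodB_const {n d : ℕ} {a : Fin n → ℤ} {B : Finset (Fin n)} {i0 : Fin n}
    (h : ∀ x ∈ B, (d : ℤ) ∣ a x - a i0) : GoodB d a B := by
  intro _ x hx y hy
  have h' := dvd_sub (h x hx) (h y hy)
  rwa [sub_sub_sub_cancel_right] at h'

private lemma goodB_not {n d : ℕ} {a : Fin n → ℤ} {B : Finset (Fin n)}
    (h : ¬ (d : ℤ) ∣ ∑ i ∈ B, a i) : GoodB d a B :=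
  fun hd => absurd hd h

/-- In a set of at least `2q` elements one can find a good block of size `q`. -/
private lemma exists_good_block {n : ℕ} (d q : ℕ) (hq : 0 < q) (a : Fin n → ℤ)
    (S : Finset (Fin n)) (hS : 2 * q ≤ S.card) :
    ∃ B, B ⊆ S ∧ B.card = q ∧ GoodB d a B := by
  by_cases hbig : ∃ i ∈ S, q ≤ (S.filter fun j => (d : ℤ) ∣ a j - a i).card
  · obtain ⟨i, hi, hcard⟩ := hbig
    obtain ⟨B, hBsub, hBcard⟩ := Finset.exists_subset_card_eq (n := q) hcard
    refine ⟨B, hBsub.trans (Finset.filter_subset _ _), hBcard, goodB_const (i0 := i) ?_⟩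
    intro x hx
    exact (Finset.mem_filter.mp (hBsub hx)).2
  · push_neg at hbig
    obtain ⟨C, hCsub, hCcard⟩ := Finset.exists_subset_card_eq (s := S) (n := q - 1) (by omega)
    have hR : q + 1 ≤ (S \ C).card := by
      rw [Finset.card_sdiff_of_subset hCsub]; omega
    have hex : ∃ e ∈ S \ C, ¬ (d : ℤ) ∣ (∑ x ∈ C, a x) + a e := by
      by_contra hno
      push_neg at hno
      have hR0 : (S \ C).Nonempty := Finset.card_pos.mp (by omega)
      obtain ⟨e0, he0⟩ := hR0
      have hsub : (S \ C) ⊆ S.filter fun j => (d : ℤ) ∣ a j - a e0 := by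
        intro e he
        rw [Finset.mem_filter]
        refine ⟨(Finset.mem_sdiff.mp he).1, ?_⟩
        have h' := dvd_sub (hno e he) (hno e0 he0)
        rwa [add_sub_add_left_eq_sub] at h'
      have hle := Finset.card_le_card hsub
      have hlt := hbig e0 (Finset.mem_sdiff.mp he0).1
      omega
    obtain ⟨e, he, hnd⟩ := hex
    have heC : e ∉ C := (Finset.mem_sdiff.mp he).2
    refine ⟨insert e C, Finset.insert_subset (Finset.mem_sdiff.mp he).1 hCsub, ?_,
      goodB_not ?_⟩
    · rw [Finset.card_insert_of_notMem heC, hCcard]; omega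
    · rw [Finset.sum_insert heC]
      intro hdv
      exact hnd (by rwa [add_comm] at hdv)

/-- Base case: a set of exactly `2q` elements splits into two good blocks of size `q`. -/
private lemma base2 {n : ℕ} (d q : ℕ) (hq : 0 < q) (hdq : d ∣ q) (a : Fin n → ℤ)
    (S : Finset (Fin n)) (hS : S.card = 2 * q) :
    ∃ B, B ⊆ S ∧ B.card = q ∧ GoodB d a B ∧ GoodB d a (S \ B) := by
  have hdqz : (d : ℤ) ∣ (q : ℤ) := Int.natCast_dvd_natCast.mpr hdq
  by_cases hbig : ∃ i ∈ S, q ≤ (S.filter fun j => (d : ℤ) ∣ a j - a i).card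
  · -- some residue class has at least q elements
    obtain ⟨i, hi, hcard⟩ := hbig
    obtain ⟨B, hBsub, hBcard⟩ := Finset.exists_subset_card_eq (n := q) hcard
    have hBS : B ⊆ S := hBsub.trans (Finset.filter_subset _ _)
    have hBconst : ∀ x ∈ B, (d : ℤ) ∣ a x - a i := fun x hx =>
      (Finset.mem_filter.mp (hBsub hx)).2
    have hgB : GoodB d a B := goodB_const (i0 := i) hBconst
    have hdsumB : (d : ℤ) ∣ ∑ x ∈ B, a x := by
      have h1 : (∑ x ∈ B, a x) = (∑ x ∈ B, (a x - a i)) + (q : ℤ) * a i := by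
        rw [Finset.sum_sub_distrib, Finset.sum_const, hBcard]
        push_cast
        ring
      rw [h1]
      exact dvd_add (Finset.dvd_sum fun x hx => hBconst x hx) (hdqz.mul_right _)
    have hsd : (∑ x ∈ S \ B, a x) + ∑ x ∈ B, a x = ∑ x ∈ S, a x := Finset.sum_sdiff hBS
    by_cases hS' : (d : ℤ) ∣ ∑ x ∈ S \ B, a x
    · by_cases hconst : ∀ x ∈ S \ B, ∀ y ∈ S \ B, (d : ℤ) ∣ a x - a y
      · exact ⟨B, hBS, hBcard, hgB, fun _ => hconst⟩
      · push_neg at hconst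
        obtain ⟨x, hx, y, hy, hxy⟩ := hconst
        have hy0 : ∃ z ∈ S \ B, ¬ (d : ℤ) ∣ a z - a i := by
          by_cases h : (d : ℤ) ∣ a x - a i
          · refine ⟨y, hy, fun hc => hxy ?_⟩
            have h' := dvd_sub h hc
            rwa [sub_sub_sub_cancel_right] at h'
          · exact ⟨x, hx, h⟩
        obtain ⟨z, hz, hzi⟩ := hy0
        have hzS : z ∈ S := (Finset.mem_sdiff.mp hz).1
        have hzB : z ∉ B := (Finset.mem_sdiff.mp hz).2
        have hBne : B.Nonempty := Finset.card_pos.mp (by omega)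
        obtain ⟨b, hb⟩ := hBne
        have hzBe : z ∉ B.erase b := fun h => hzB (Finset.mem_of_mem_erase h)
        have hB'card : (insert z (B.erase b)).card = q := by
          rw [Finset.card_insert_of_notMem hzBe, Finset.card_erase_of_mem hb, hBcard]
          omega
        have hB'S : insert z (B.erase b) ⊆ S :=
          Finset.insert_subset hzS ((Finset.erase_subset _ _).trans hBS)
        have hsumB' : ∑ v ∈ insert z (B.erase b), a v = a z + ((∑ v ∈ B, a v) - a b) := by
          rw [Finset.sum_insert hzBe, Finset.sum_erase_eq_sub hb]
        have hndB' : ¬ (d : ℤ) ∣ ∑ v ∈ insert z (B.erase b), a v := by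
          intro hcon
          apply hzi
          have heq : a z - a i =
              (∑ v ∈ insert z (B.erase b), a v) - (∑ v ∈ B, a v) + (a b - a i) := by
            rw [hsumB']; ring
          rw [heq]
          exact dvd_add (dvd_sub hcon hdsumB) (hBconst b hb)
        have hT : (d : ℤ) ∣ ∑ x ∈ S, a x := by
          rw [← hsd]; exact dvd_add hS' hdsumB
        have hndS' : ¬ (d : ℤ) ∣ ∑ v ∈ S \ insert z (B.erase b), a v := by
          intro hcon
          apply hndB'
          have h2 : (∑ v ∈ S \ insert z (B.erase b), a v) +
              ∑ v ∈ insert z (B.erase b), a v = ∑ x ∈ S, a x := Finset.sum_sdiff hB'S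
          have heq : (∑ v ∈ insert z (B.erase b), a v) =
              (∑ x ∈ S, a x) - ∑ v ∈ S \ insert z (B.erase b), a v := by linarith
          rw [heq]
          exact dvd_sub hT hcon
        exact ⟨insert z (B.erase b), hB'S, hB'card, goodB_not hndB', goodB_not hndS'⟩
    · exact ⟨B, hBS, hBcard, hgB, goodB_not hS'⟩
  · -- all residue classes are smaller than q : there are 3 pairwise incongruent elements
    push_neg at hbig
    have hSne : S.Nonempty := Finset.card_pos.mp (by omega)
    obtain ⟨i, hi⟩ := hSne
    have hii : i ∈ S.filter fun j => (d : ℤ) ∣ a j - a i :=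
      Finset.mem_filter.mpr ⟨hi, by simp⟩
    have hq2 : 2 ≤ q := by
      have h1 := hbig i hi
      have h2 : 1 ≤ (S.filter fun j => (d : ℤ) ∣ a j - a i).card :=
        Finset.card_pos.mpr ⟨i, hii⟩
      omega
    have hexj : ∃ j ∈ S, ¬ (d : ℤ) ∣ a j - a i := by
      by_contra h
      push_neg at h
      have hsub : S ⊆ S.filter fun j => (d : ℤ) ∣ a j - a i := fun x hx =>
        Finset.mem_filter.mpr ⟨hx, h x hx⟩
      have := Finset.card_le_card hsub
      have := hbig i hi
      omega
    obtain ⟨j, hj, hji⟩ := hexj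
    have hexl : ∃ l ∈ S, ¬ (d : ℤ) ∣ a l - a i ∧ ¬ (d : ℤ) ∣ a l - a j := by
      by_contra h
      push_neg at h
      have hsub : S ⊆ (S.filter fun x => (d : ℤ) ∣ a x - a i) ∪
          (S.filter fun x => (d : ℤ) ∣ a x - a j) := by
        intro x hx
        by_cases h1 : (d : ℤ) ∣ a x - a i
        · exact Finset.mem_union_left _ (Finset.mem_filter.mpr ⟨hx, h1⟩)
        · exact Finset.mem_union_right _ (Finset.mem_filter.mpr ⟨hx, h x hx h1⟩)
      have h1 := Finset.card_le_card hsub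
      have h2 := Finset.card_union_le (S.filter fun x => (d : ℤ) ∣ a x - a i)
        (S.filter fun x => (d : ℤ) ∣ a x - a j)
      have h3 := hbig i hi
      have h4 := hbig j hj
      omega
    obtain ⟨l, hl, hli, hlj⟩ := hexl
    have hij : i ≠ j := by
      rintro rfl
      exact hji (by simp)
    have hil : i ≠ l := by
      intro h
      exact hli (by rw [← h]; simp)
    have hjl : j ≠ l := by
      intro h
      exact hlj (by rw [← h]; simp)
    have hc3 : ({i, j, l} : Finset (Fin n)).card = 3 := by
      rw [Finset.card_insert_of_notMem (by simp [hij, hil]),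
        Finset.card_insert_of_notMem (by simp [hjl]), Finset.card_singleton]
    have hsub3 : ({i, j, l} : Finset (Fin n)) ⊆ S := by
      intro x hx
      simp only [Finset.mem_insert, Finset.mem_singleton] at hx
      rcases hx with rfl | rfl | rfl <;> assumption
    have hcd : q - 2 ≤ (S \ ({i, j, l} : Finset (Fin n))).card := by
      rw [Finset.card_sdiff_of_subset hsub3, hc3]; omega
    obtain ⟨C, hCsub, hCcard⟩ := Finset.exists_subset_card_eq (n := q - 2) hcd
    have hCS : C ⊆ S := hCsub.trans Finset.sdiff_subset
    have hCnot : ∀ x, x ∈ ({i, j, l} : Finset (Fin n)) → x ∉ C := by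
      intro x hx hxC
      exact (Finset.mem_sdiff.mp (hCsub hxC)).2 hx
    have hiC : i ∉ C := hCnot i (by simp)
    have hjC : j ∉ C := hCnot j (by simp)
    have hlC : l ∉ C := hCnot l (by simp)
    set σ := ∑ x ∈ C, a x with hσ
    set T := ∑ x ∈ S, a x with hT
    have build : ∀ x y : Fin n, x ∈ S → y ∈ S → x ∉ C → y ∉ C → x ≠ y →
        ¬ (d : ℤ) ∣ σ + a x + a y → ¬ (d : ℤ) ∣ T - (σ + a x + a y) →
        ∃ B, B ⊆ S ∧ B.card = q ∧ GoodB d a B ∧ GoodB d a (S \ B) := by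
      intro x y hxS hyS hxC hyC hxy hs hTs
      have hxyC : x ∉ insert y C := by simp [hxy, hxC]
      have hcard : (insert x (insert y C)).card = q := by
        rw [Finset.card_insert_of_notMem hxyC, Finset.card_insert_of_notMem hyC, hCcard]
        omega
      have hBS : insert x (insert y C) ⊆ S :=
        Finset.insert_subset hxS (Finset.insert_subset hyS hCS)
      have hsum : ∑ v ∈ insert x (insert y C), a v = σ + a x + a y := by
        rw [Finset.sum_insert hxyC, Finset.sum_insert hyC, hσ]; ring
      refine ⟨insert x (insert y C), hBS, hcard, goodB_not (by rw [hsum]; exact hs),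
        goodB_not ?_⟩
      have h2 : (∑ v ∈ S \ insert x (insert y C), a v) +
          ∑ v ∈ insert x (insert y C), a v = T := Finset.sum_sdiff hBS
      have heq : ∑ v ∈ S \ insert x (insert y C), a v = T - (σ + a x + a y) := by
        rw [← hsum]; linarith
      rw [heq]; exact hTs
    have h12 : ¬ (d : ℤ) ∣ (σ + a i + a j) - (σ + a i + a l) := by
      rw [show (σ + a i + a j) - (σ + a i + a l) = -(a l - a j) by ring]
      exact fun h => hlj (dvd_neg.mp h)
    have h13 : ¬ (d : ℤ) ∣ (σ + a i + a j) - (σ + a j + a l) := by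
      rw [show (σ + a i + a j) - (σ + a j + a l) = -(a l - a i) by ring]
      exact fun h => hli (dvd_neg.mp h)
    have h23 : ¬ (d : ℤ) ∣ (σ + a i + a l) - (σ + a j + a l) := by
      rw [show (σ + a i + a l) - (σ + a j + a l) = -(a j - a i) by ring]
      exact fun h => hji (dvd_neg.mp h)
    rcases pick3 (T := T) h12 h13 h23 with ⟨hA, hB⟩ | ⟨hA, hB⟩ | ⟨hA, hB⟩
    · exact build i j hi hj hiC hjC hij hA hB
    · exact build i l hi hl hiC hlC hil hA hB
    · exact build j l hj hl hjC hlC hjl hA hB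

private lemma core {n : ℕ} (d q : ℕ) (hq : 0 < q) (hdq : d ∣ q) (a : Fin n → ℤ) :
    ∀ m, 2 ≤ m → ∀ S : Finset (Fin n), S.card = m * q →
    ∃ I : Fin m → Finset (Fin n),
      (∀ s t, s ≠ t → Disjoint (I s) (I t)) ∧
      (∀ k ∈ S, ∃ s, k ∈ I s) ∧
      (∀ s, (I s).card = q) ∧
      (∀ s, GoodB d a (I s)) ∧ (∀ s, I s ⊆ S) := by
  intro m hm
  induction m, hm using Nat.le_induction with
  | base =>
    intro S hS
    obtain ⟨B, hBS, hBcard, hgB, hgS⟩ := base2 d q hq hdq a S (by omega)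
    refine ⟨fun s => if s = 0 then B else S \ B, ?_, ?_, ?_, ?_, ?_⟩
    · intro s t hst
      fin_cases s <;> fin_cases t <;> simp_all [Fin.ext_iff] <;>
        first
          | exact Finset.disjoint_sdiff
          | exact Finset.disjoint_sdiff.symm
    · intro k hk
      by_cases hkB : k ∈ B
      · exact ⟨0, by simp [hkB]⟩
      · refine ⟨1, ?_⟩
        simp [Fin.ext_iff, Finset.mem_sdiff, hk, hkB]
    · intro s
      fin_cases s
      · simpa using hBcard
      · have hc : (S \ B).card = q := by
          rw [Finset.card_sdiff_of_subset hBS, hS, hBcard]; omega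
        simpa [Fin.ext_iff] using hc
    · intro s
      fin_cases s
      · simpa using hgB
      · simpa [Fin.ext_iff] using hgS
    · intro s
      fin_cases s
      · simpa using hBS
      · simpa [Fin.ext_iff] using (Finset.sdiff_subset : S \ B ⊆ S)
  | succ m hm ih =>
    intro S hS
    have h2q : 2 * q ≤ S.card := by
      have h1 : 2 * q ≤ (m + 1) * q := Nat.mul_le_mul_right q (by omega)
      omega
    obtain ⟨B, hBS, hBcard, hgB⟩ := exists_good_block d q hq a S h2q
    have hS' : (S \ B).card = m * q := by
      rw [Finset.card_sdiff_of_subset hBS, hS, hBcard, Nat.succ_mul, Nat.add_sub_cancel]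
    obtain ⟨I', hdisj, hcover, hcard, hgood, hsub⟩ := ih (S \ B) hS'
    have hd0 : ∀ t, Disjoint B (I' t) := by
      intro t
      exact Finset.disjoint_left.mpr fun x hxB hxI =>
        (Finset.mem_sdiff.mp (hsub t hxI)).2 hxB
    refine ⟨Fin.cons B I', ?_, ?_, ?_, ?_, ?_⟩
    · intro s t hst
      induction s using Fin.cases with
      | zero =>
        induction t using Fin.cases with
        | zero => exact absurd rfl hst
        | succ t =>
          simp only [Fin.cons_zero, Fin.cons_succ]
          exact hd0 t
      | succ s =>
        induction t using Fin.cases with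
        | zero =>
          simp only [Fin.cons_zero, Fin.cons_succ]
          exact (hd0 s).symm
        | succ t =>
          simp only [Fin.cons_succ]
          exact hdisj s t fun h => hst (by rw [h])
    · intro k hk
      by_cases hkB : k ∈ B
      · exact ⟨0, by simpa using hkB⟩
      · obtain ⟨s, hs⟩ := hcover k (Finset.mem_sdiff.mpr ⟨hk, hkB⟩)
        exact ⟨s.succ, by simpa using hs⟩
    · intro s
      induction s using Fin.cases with
      | zero => simpa using hBcard
      | succ s => simpa using hcard s
    · intro s
      induction s using Fin.cases with
      | zero => simpa [GoodB] using hgB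
      | succ s => simpa [GoodB] using hgood s
    · intro s
      induction s using Fin.cases with
      | zero => simpa using hBS
      | succ s =>
        simp only [Fin.cons_succ]
        exact (hsub s).trans Finset.sdiff_subset

/-- Let `n = m·q` with `m ≥ 2`, `q ≥ 1`, let `d` be a positive divisor of `q`, and let
`a_1, ..., a_n` be integers (indexed by `Fin n`).  Then there is a partition
`I_1, ..., I_m` of `{1, ..., n}` into sets of size `q` such that for each `s`,
if `d ∣ ∑_{i ∈ I_s} a_i` then all the `a_i` with `i ∈ I_s` are pairwise congruent mod `d`. -/
theorem stmt_2 (m q n : ℕ) (hm : 2 ≤ m) (hq : 0 < q) (hn : n = m * q)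
    (d : ℕ) (hd : 0 < d) (hdq : d ∣ q) (a : Fin n → ℤ) :
    ∃ I : Fin m → Finset (Fin n),
      (∀ s t, s ≠ t → Disjoint (I s) (I t)) ∧
      (∀ k : Fin n, ∃ s, k ∈ I s) ∧
      (∀ s, (I s).card = q) ∧
      (∀ s, ((d : ℤ) ∣ ∑ i ∈ I s, a i) →
        ∀ i ∈ I s, ∀ j ∈ I s, (d : ℤ) ∣ a i - a j) := by
  have hcard : (Finset.univ : Finset (Fin n)).card = m * q := by simp [hn]
  obtain ⟨I, hdisj, hcover, hcards, hgood, _⟩ := core d q hq hdq a m hm Finset.univ hcard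
  exact ⟨I, hdisj, fun k => hcover k (Finset.mem_univ k), hcards, fun s => hgood s⟩
end

section
/- Let p be an odd prime, let α be a positive integer, let n = p^α, and let a_1, ..., a_n be integers. Suppose that either a_1 + ... + a_n ≢ 0 (mod p), or all the integers a_1, ..., a_n are pairwise congruent modulo p. Then there exists a permutation σ of {1, ..., n} such that ∑_{k=1}^n k·a_{σ(k)} ≡ 0 (mod n). -/
lemma shift_exists (n : ℕ) [NeZero n] (b : Fin n → ℤ) (c : ℕ)
    (hu : IsUnit ((∑ k, b k : ℤ) : ZMod n)) :
    ∃ σ : Equiv.Perm (Fin n), (n : ℤ) ∣ ∑ k : Fin n, ((k.val : ℤ) + c) * b (σ k) := by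
  set S : ZMod n := ((∑ k, b k : ℤ) : ZMod n) with hS
  set T : ZMod n := ((∑ k : Fin n, ((k.val : ℤ) + c) * b k : ℤ) : ZMod n) with hT
  set x : ZMod n := -T * ↑hu.unit⁻¹ with hx
  refine ⟨Equiv.subRight (⟨x.val, x.val_lt⟩ : Fin n), ?_⟩
  rw [← ZMod.intCast_zmod_eq_zero_iff_dvd]
  set j : Fin n := ⟨x.val, x.val_lt⟩ with hj
  have key : ∀ i : Fin n, (((i + j).val : ℤ) + c) * b (i + j - j) = (fun k => ((k.val : ℤ) + c) * b (k - j)) (i + j) := fun i => rfl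
  have reindex := Equiv.sum_comp (Equiv.addRight j) (fun k => ((k.val : ℤ) + c) * b (k - j))
  have e1 : ∑ k : Fin n, ((k.val : ℤ) + c) * b (k - j) = ∑ i : Fin n, (((i + j).val : ℤ) + c) * b i := by
    rw [← reindex]
    refine Finset.sum_congr rfl fun i _ => ?_
    simp [Equiv.coe_addRight, add_sub_cancel_right]
  have e2 : ((∑ i : Fin n, (((i + j).val : ℤ) + c) * b i : ℤ) : ZMod n) = T + (j.val : ZMod n) * S := by
    rw [hT, hS]
    push_cast
    rw [Finset.mul_sum, ← Finset.sum_add_distrib]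
    refine Finset.sum_congr rfl fun i _ => ?_
    have : (((i + j).val : ℕ) : ZMod n) = (i.val : ZMod n) + (j.val : ZMod n) := by
      rw [Fin.add_def]; push_cast [ZMod.natCast_mod]; ring
    rw [this]; ring
  have hjv : ((j.val : ℕ) : ZMod n) = x := by
    simp [hj, ZMod.natCast_val, ZMod.cast_id]
  have : ∑ k : Fin n, ((k.val : ℤ) + c) * b ((Equiv.subRight j) k) = ∑ i : Fin n, (((i + j).val : ℤ) + c) * b i := by
    simpa [Equiv.subRight] using e1
  rw [this, e2, hjv, hx]
  have : (↑hu.unit⁻¹ : ZMod n) * S = 1 := by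
    have := hu.unit.inv_mul
    simpa [hS] using this
  rw [mul_assoc, this, mul_one]
  ring

lemma unit_of_not_dvd (p : ℕ) (hp : p.Prime) (α : ℕ) (S : ℤ) (h : ¬ (p : ℤ) ∣ S) :
    IsUnit ((S : ZMod (p ^ α))) := by
  have h1 : ¬ p ∣ S.natAbs := by rw [Int.natCast_dvd] at h; exact h
  have h2 : Nat.Coprime S.natAbs (p ^ α) :=
    Nat.Coprime.pow_right _ ((Nat.Prime.coprime_iff_not_dvd hp).2 h1).symm
  have h3 : IsUnit ((S.natAbs : ZMod (p ^ α))) := (ZMod.isUnit_iff_coprime _ _).2 h2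
  have h4 : (((S.natAbs : ℤ)) : ZMod (p ^ α)) = (S.natAbs : ZMod (p ^ α)) := Int.cast_natCast _
  rcases Int.natAbs_eq S with he | he
  · rw [he, h4]; exact h3
  · rw [he, Int.cast_neg, h4]; exact h3.neg

lemma egz_partition {ι : Type*} [DecidableEq ι] (p : ℕ) (hp : p.Prime) (f : ι → ℤ) :
    ∀ t (s : Finset ι), s.card = p * t → (p : ℤ) ∣ ∑ i ∈ s, f i →
    ∃ P : Fin t → Finset ι,
      (∀ r, (P r).card = p) ∧ (∀ r, (p : ℤ) ∣ ∑ i ∈ P r, f i) ∧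
      (∀ r r', r ≠ r' → Disjoint (P r) (P r')) ∧ (∀ r, P r ⊆ s) ∧ (∀ i ∈ s, ∃ r, i ∈ P r) := by
  intro t
  induction t with
  | zero =>
    intro s hcard _
    refine ⟨Fin.elim0, by simp [Fin.forall_fin_zero_pi], ?_, ?_, ?_, ?_⟩ <;>
      first
        | exact fun r => r.elim0
        | (intro i hi; rw [Nat.mul_zero, Finset.card_eq_zero] at hcard; simp [hcard] at hi)
  | succ t ih =>
    intro s hcard hsum
    rcases Nat.eq_zero_or_pos t with rfl | ht
    · exact ⟨fun _ => s, fun _ => by simpa using hcard, fun _ => hsum,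
        fun r r' hne => absurd (Fin.ext (by omega : r.val = r'.val)) hne, fun _ => subset_rfl,
        fun i hi => ⟨0, hi⟩⟩
    · have hEGZ : 2 * p - 1 ≤ s.card := by
        have : p * 2 ≤ p * (t + 1) := Nat.mul_le_mul_left _ (by omega)
        omega
      obtain ⟨u, hus, hucard, husum⟩ := Int.erdos_ginzburg_ziv f hEGZ
      have hcard' : (s \ u).card = p * t := by
        rw [Finset.card_sdiff_of_subset hus, hucard, hcard]; ring_nf; omega
      have hsum' : (p : ℤ) ∣ ∑ i ∈ s \ u, f i := by
        rw [Finset.sum_sdiff_eq_sub hus]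
        exact dvd_sub hsum husum
      obtain ⟨P, h1, h2, h3, h4, h5⟩ := ih (s \ u) hcard' hsum'
      refine ⟨Fin.cons u P, ?_, ?_, ?_, ?_, ?_⟩
      · intro r; induction r using Fin.cases <;> simp [hucard, h1]
      · intro r; induction r using Fin.cases <;> simp [husum, h2]
      · intro r r' hne
        induction r using Fin.cases with
        | zero =>
          induction r' using Fin.cases with
          | zero => exact absurd rfl hne
          | succ r' =>
            simp only [Fin.cons_zero, Fin.cons_succ]
            exact (Finset.sdiff_disjoint.mono_left (h4 r')).symm
        | succ r =>
          induction r' using Fin.cases with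
          | zero =>
            simp only [Fin.cons_zero, Fin.cons_succ]
            exact Finset.sdiff_disjoint.mono_left (h4 r)
          | succ r' =>
            simp only [Fin.cons_succ]
            exact h3 r r' (by simpa using hne)
      · intro r; induction r using Fin.cases with
        | zero => simpa using hus
        | succ r => simpa using (h4 r).trans Finset.sdiff_subset
      · intro i hi
        by_cases hiu : i ∈ u
        · exact ⟨0, by simpa using hiu⟩
        · obtain ⟨r, hr⟩ := h5 i (Finset.mem_sdiff.2 ⟨hi, hiu⟩)
          exact ⟨r.succ, by simpa using hr⟩

lemma key (p : ℕ) (hp : p.Prime) :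
    ∀ α (b : Fin (p ^ α) → ℤ), ∃ σ : Equiv.Perm (Fin (p ^ α)),
      ((p ^ (α - 1) : ℕ) : ℤ) ∣ ∑ k : Fin (p ^ α), (k.val : ℤ) * b (σ k) := by
  intro α
  induction α with
  | zero => intro b; exact ⟨1, by simp⟩
  | succ α ih =>
    intro b
    by_cases hS : (p : ℤ) ∣ ∑ k, b k
    case neg =>
      have : NeZero (p ^ (α + 1)) := ⟨pow_ne_zero _ hp.pos.ne'⟩
      obtain ⟨σ, hσ⟩ := shift_exists (p ^ (α + 1)) b 0 (unit_of_not_dvd p hp _ _ hS)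
      refine ⟨σ, dvd_trans ?_ (by simpa using hσ)⟩
      exact_mod_cast pow_dvd_pow p (by omega)
    case pos =>
      rcases Nat.eq_zero_or_pos α with rfl | hα
      · exact ⟨1, by simp⟩
      classical
      have hcard : (Finset.univ : Finset (Fin (p ^ (α + 1)))).card = p * p ^ α := by
        simp [pow_succ, Nat.mul_comm]
      obtain ⟨P, hPcard, hPdvd, hPdisj, -, hPcover⟩ :=
        egz_partition p hp b (p ^ α) Finset.univ hcard (by simpa using hS)
      -- group assignment function
      have hex : ∀ k : Fin (p ^ (α + 1)), ∃ r, k ∈ P r := fun k => hPcover k (Finset.mem_univ k)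
      set g : Fin (p ^ (α + 1)) → Fin (p ^ α) := fun k => (hex k).choose with hg
      have hgmem : ∀ k, k ∈ P (g k) := fun k => (hex k).choose_spec
      have hgiff : ∀ k r, g k = r ↔ k ∈ P r := by
        intro k r
        constructor
        · rintro rfl; exact hgmem k
        · intro hk
          by_contra hne
          exact (Finset.disjoint_left.1 (hPdisj _ _ hne) (hgmem k)) hk
      -- fiber equivs
      have hfibcard : ∀ r, Fintype.card {x // g x = r} = p := by
        intro r
        rw [Fintype.card_subtype]
        have : Finset.univ.filter (fun x => g x = r) = P r := by
          ext k; simp [hgiff]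
        rw [this, hPcard]
      set eG : Fin p × Fin (p ^ α) ≃ Fin (p ^ (α + 1)) :=
        (Equiv.prodComm _ _).trans ((Equiv.sigmaEquivProd (Fin (p ^ α)) (Fin p)).symm.trans
          ((Equiv.sigmaCongrRight (fun r => (Fintype.equivFinOfCardEq (hfibcard r)).symm)).trans
            (Equiv.sigmaFiberEquiv g))) with heG
      have hgG : ∀ x : Fin p × Fin (p ^ α), g (eG x) = x.2 := by
        rintro ⟨t, r⟩
        exact ((Fintype.equivFinOfCardEq (hfibcard r)).symm t).2
      set eC : Fin p × Fin (p ^ α) ≃ Fin (p ^ (α + 1)) :=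
        finProdFinEquiv.trans (finCongr (by rw [← pow_succ'])) with heC
      have heCval : ∀ x : Fin p × Fin (p ^ α), ((eC x).val : ℤ)
          = (x.2.val : ℤ) + (p ^ α : ℕ) * x.1.val := by
        rintro ⟨t, r⟩
        simp [heC, finProdFinEquiv]
      have hU : ∀ r, ∑ i ∈ P r, b i = p * ((∑ i ∈ P r, b i) / p) :=
        fun r => (Int.mul_ediv_cancel' (hPdvd r)).symm
      obtain ⟨τ, hτ⟩ := ih (fun r => (∑ i ∈ P r, b i) / p)
      refine ⟨eC.symm.trans ((Equiv.prodCongr (Equiv.refl (Fin p)) τ).trans eG), ?_⟩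
      set σ := eC.symm.trans ((Equiv.prodCongr (Equiv.refl (Fin p)) τ).trans eG) with hσ
      have hcomp : ∀ x : Fin p × Fin (p ^ α), σ (eC x) = eG (x.1, τ x.2) := by
        rintro ⟨t, r⟩; simp [hσ]
      have hsum1 : ∑ k : Fin (p ^ (α + 1)), (k.val : ℤ) * b (σ k)
          = ∑ x : Fin p × Fin (p ^ α), ((eC x).val : ℤ) * b (σ (eC x)) :=
        (Equiv.sum_comp eC _).symm
      have hfibsum : ∀ r' : Fin (p ^ α), ∑ t : Fin p, b (eG (t, r')) = ∑ i ∈ P r', b i := by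
        intro r'
        refine Finset.sum_bij (fun t _ => eG (t, r')) ?_ ?_ ?_ ?_
        · intro t _; exact (hgiff _ _).1 (hgG (t, r'))
        · intro t₁ _ t₂ _ hteq
          exact congrArg Prod.fst (eG.injective hteq)
        · intro i hi
          refine ⟨(eG.symm i).1, Finset.mem_univ _, ?_⟩
          have h3 := hgG (eG.symm i)
          rw [Equiv.apply_symm_apply] at h3
          have h2 : (eG.symm i).2 = r' := by rw [← h3]; exact (hgiff i r').2 hi
          show eG ((eG.symm i).1, r') = i
          rw [← h2]
          exact eG.apply_symm_apply i
        · intro t _; rfl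
      have e3 : ∑ x : Fin p × Fin (p ^ α), ((eC x).val : ℤ) * b (σ (eC x))
          = ∑ x : Fin p × Fin (p ^ α),
              (((x.2.val : ℤ) + (p ^ α : ℕ) * x.1.val) * b (eG (x.1, τ x.2))) :=
        Finset.sum_congr rfl fun x _ => by rw [heCval, hcomp]
      have e4 : ∑ x : Fin p × Fin (p ^ α),
              (((x.2.val : ℤ) + (p ^ α : ℕ) * x.1.val) * b (eG (x.1, τ x.2)))
          = (∑ x : Fin p × Fin (p ^ α), (x.2.val : ℤ) * b (eG (x.1, τ x.2)))
            + ((p ^ α : ℕ) : ℤ) * ∑ x : Fin p × Fin (p ^ α), (x.1.val : ℤ) * b (eG (x.1, τ x.2)) := by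
        rw [Finset.mul_sum, ← Finset.sum_add_distrib]
        exact Finset.sum_congr rfl fun x _ => by ring
      have e5 : ∑ x : Fin p × Fin (p ^ α), (x.2.val : ℤ) * b (eG (x.1, τ x.2))
          = (p : ℤ) * ∑ r : Fin (p ^ α), (r.val : ℤ) * ((∑ i ∈ P (τ r), b i) / p) := by
        rw [Fintype.sum_prod_type_right, Finset.mul_sum]
        refine Finset.sum_congr rfl fun r _ => ?_
        simp only
        rw [← Finset.mul_sum, hfibsum (τ r)]
        conv_lhs => rw [hU (τ r)]
        ring
      show ((p ^ (α + 1 - 1) : ℕ) : ℤ) ∣ _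
      rw [Nat.add_sub_cancel, hsum1, e3, e4, e5]
      refine dvd_add ?_ (Dvd.intro _ rfl)
      obtain ⟨w, hw⟩ := hτ
      rw [hw]
      have hcast : ((p ^ α : ℕ) : ℤ) = (p : ℤ) * ((p ^ (α - 1) : ℕ) : ℤ) := by
        push_cast
        rw [← pow_succ']
        congr 1
        omega
      rw [hcast]
      exact ⟨w, by ring⟩

lemma key1 (p : ℕ) (hp : p.Prime) (α : ℕ) (hα : 0 < α) (b : Fin (p ^ α) → ℤ) :
    ∃ σ : Equiv.Perm (Fin (p ^ α)),
      ((p ^ (α - 1) : ℕ) : ℤ) ∣ ∑ k : Fin (p ^ α), ((k.val : ℤ) + 1) * b (σ k) := by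
  obtain ⟨σ, hσ⟩ := key p hp α b
  haveI : NeZero (p ^ α) := ⟨pow_ne_zero _ hp.pos.ne'⟩
  have hn2 : 2 ≤ p ^ α := by
    calc 2 ≤ p := hp.two_le
    _ = p ^ 1 := (pow_one p).symm
    _ ≤ p ^ α := Nat.pow_le_pow_right hp.pos hα
  have h1v : (1 : Fin (p ^ α)).val = 1 := by
    rw [Fin.val_one']
    exact Nat.mod_eq_of_lt hn2
  refine ⟨(Equiv.addRight (1 : Fin (p ^ α))).trans σ, ?_⟩
  have F := fun i : Fin (p ^ α) => (((i - 1 : Fin (p ^ α)).val : ℤ) + 1) * b (σ i)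
  have reindex : ∑ k : Fin (p ^ α), ((k.val : ℤ) + 1) * b (σ (k + 1))
      = ∑ i : Fin (p ^ α), (((i - 1 : Fin (p ^ α)).val : ℤ) + 1) * b (σ i) := by
    rw [← Equiv.sum_comp (Equiv.addRight (1 : Fin (p ^ α)))
      (fun i => (((i - 1 : Fin (p ^ α)).val : ℤ) + 1) * b (σ i))]
    refine Finset.sum_congr rfl fun k _ => ?_
    simp only [Equiv.coe_addRight, add_sub_cancel_right]
  have hsub : ∀ i : Fin (p ^ α), (i - 1 : Fin (p ^ α)).val
      = (p ^ α - 1 + i.val) % (p ^ α) := by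
    intro i
    rw [Fin.sub_def, h1v]
  have split : ∑ i : Fin (p ^ α), ((((i - 1 : Fin (p ^ α)).val : ℤ) + 1) * b (σ i)
        - (i.val : ℤ) * b (σ i)) = ((p ^ α : ℕ) : ℤ) * b (σ 0) := by
    rw [Finset.sum_eq_single (0 : Fin (p ^ α))]
    · have : ((0 : Fin (p ^ α)) - 1).val = p ^ α - 1 := by
        rw [hsub]
        simp only [Fin.val_zero, Nat.add_zero]
        exact Nat.mod_eq_of_lt (by omega)
      rw [this]
      have : ((p ^ α - 1 : ℕ) : ℤ) + 1 = ((p ^ α : ℕ) : ℤ) := by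
        have := hn2; push_cast [Nat.cast_sub (by omega : 1 ≤ p ^ α)]; ring
      rw [this]
      push_cast [Fin.val_zero]
      ring
    · intro i _ hne
      have hiv : 1 ≤ i.val := by
        by_contra hc
        exact hne (Fin.ext (by simp only [Fin.val_zero]; omega))
      have : (i - 1 : Fin (p ^ α)).val = i.val - 1 := by
        rw [hsub]
        have he : p ^ α - 1 + i.val = p ^ α + (i.val - 1) := by omega
        rw [he, Nat.add_mod_left]
        exact Nat.mod_eq_of_lt (by omega)
      rw [this]
      have : ((i.val - 1 : ℕ) : ℤ) + 1 = (i.val : ℤ) := by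
        push_cast [Nat.cast_sub hiv]; ring
      rw [this]
      ring
    · intro h; exact absurd (Finset.mem_univ _) h
  simp only [Equiv.trans_apply, Equiv.coe_addRight]
  rw [reindex]
  have : ∑ i : Fin (p ^ α), (((i - 1 : Fin (p ^ α)).val : ℤ) + 1) * b (σ i)
      = (∑ i : Fin (p ^ α), (i.val : ℤ) * b (σ i)) + ((p ^ α : ℕ) : ℤ) * b (σ 0) := by
    rw [← split, Finset.sum_sub_distrib]
    ring
  rw [this]
  refine dvd_add hσ (Dvd.dvd.mul_right ?_ _)
  exact_mod_cast pow_dvd_pow p (by omega)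

/-- Let `p` be an odd prime, `α ≥ 1`, `n = p^α`, and let `a_1, ..., a_n` be integers
(indexed by `Fin n`).  If either `a_1 + ... + a_n ≢ 0 (mod p)` or all the `a_k` are
pairwise congruent mod `p`, then there is a permutation `σ` of `{1, ..., n}` with
`∑_{k=1}^n k·a_{σ(k)} ≡ 0 (mod n)`. -/
theorem stmt_3 (p : ℕ) (hp : p.Prime) (hodd : Odd p) (α : ℕ) (hα : 0 < α)
    (n : ℕ) (hn : n = p ^ α) (a : Fin n → ℤ)
    (h : ¬ ((p : ℤ) ∣ ∑ k : Fin n, a k) ∨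
      ∀ i j : Fin n, (p : ℤ) ∣ a i - a j) :
    ∃ σ : Equiv.Perm (Fin n),
      (n : ℤ) ∣ ∑ k : Fin n, ((k : ℤ) + 1) * a (σ k) := by
  subst hn
  haveI : NeZero (p ^ α) := ⟨pow_ne_zero _ hp.pos.ne'⟩
  rcases h with h | h
  · obtain ⟨σ, hσ⟩ := shift_exists (p ^ α) a 1 (unit_of_not_dvd p hp α _ h)
    exact ⟨σ, by simpa using hσ⟩
  · -- all congruent mod p
    set b : Fin (p ^ α) → ℤ := fun i => (a i - a 0) / p with hb
    have hab : ∀ i, a i = a 0 + p * b i := by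
      intro i
      rw [hb]
      simp only
      rw [Int.mul_ediv_cancel' (h i 0)]
      ring
    obtain ⟨σ, hσ⟩ := key1 p hp α hα b
    refine ⟨σ, ?_⟩
    have expand : ∑ k : Fin (p ^ α), ((k : ℤ) + 1) * a (σ k)
        = (∑ k : Fin (p ^ α), ((k.val : ℤ) + 1)) * a 0
          + (p : ℤ) * ∑ k : Fin (p ^ α), ((k.val : ℤ) + 1) * b (σ k) := by
      rw [Finset.sum_mul, Finset.mul_sum, ← Finset.sum_add_distrib]
      refine Finset.sum_congr rfl fun k _ => ?_
      rw [hab (σ k)]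
      ring
    rw [expand]
    refine dvd_add (Dvd.dvd.mul_right ?_ _) ?_
    · -- p^α ∣ ∑ (k+1) = N(N+1)/2
      have hoddN : Odd (p ^ α) := hodd.pow
      obtain ⟨c, hc⟩ := hoddN
      have h2 := Finset.sum_range_id_mul_two (p ^ α)
      have hS : (∑ i ∈ Finset.range (p ^ α), i) = p ^ α * c := by
        have he : (∑ i ∈ Finset.range (p ^ α), i) * 2 = (p ^ α * c) * 2 := by
          rw [h2]
          have h1 : p ^ α - 1 = 2 * c := by omega
          rw [h1]; ring
        exact Nat.eq_of_mul_eq_mul_right (by norm_num) he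
      have hfin : (∑ k : Fin (p ^ α), (k.val + 1)) = (∑ i ∈ Finset.range (p ^ α), (i + 1)) :=
        Fin.sum_univ_eq_sum_range (fun i => i + 1) (p ^ α)
      have hval : (∑ k : Fin (p ^ α), (k.val + 1)) = p ^ α * (c + 1) := by
        rw [hfin, Finset.sum_add_distrib, Finset.sum_const, Finset.card_range, hS]
        simp [Nat.mul_add]
      have hcast : ∑ k : Fin (p ^ α), ((k.val : ℤ) + 1) = ((p ^ α * (c + 1) : ℕ) : ℤ) := by
        rw [← hval]
        push_cast
        rfl
      rw [hcast]
      exact_mod_cast (Dvd.intro _ rfl : p ^ α ∣ p ^ α * (c + 1))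
    · -- p * (divisible by p^(α-1))
      obtain ⟨w, hw⟩ := hσ
      rw [hw]
      have hcast : ((p ^ α : ℕ) : ℤ) = (p : ℤ) * ((p ^ (α - 1) : ℕ) : ℤ) := by
        push_cast
        rw [← pow_succ']
        congr 1
        omega
      rw [hcast]
      exact ⟨w, by ring⟩
end

section
/- Let n = m·q where m and q are positive integers with m ≥ 2, let d be a positive divisor of q, and let a_1, ..., a_n be integers. Then there exists a subset I of {1, ..., n} with exactly q elements such that for each J equal to I or to the complement {1, ..., n} \ I, either all the integers a_j with j ∈ J are pairwise congruent modulo d, or d does not divide ∑_{j ∈ J} a_j. -/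
/-- Let `n = m·q` with `m ≥ 2`, `q ≥ 1`, let `d` be a positive divisor of `q`, and let
`a_1, ..., a_n` be integers (indexed by `Fin n`).  Then there is a `q`-element subset `I`
of `{1, ..., n}` such that for each `J ∈ {I, Iᶜ}`, either all the `a_j` with `j ∈ J` are
pairwise congruent mod `d`, or `d ∤ ∑_{j ∈ J} a_j`. -/
theorem stmt_5 (m q n : ℕ) (hm : 2 ≤ m) (hq : 0 < q) (hn : n = m * q)
    (d : ℕ) (hd : 0 < d) (hdq : d ∣ q) (a : Fin n → ℤ) :
    ∃ I : Finset (Fin n), I.card = q ∧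
      ∀ J : Finset (Fin n), (J = I ∨ J = Iᶜ) →
        ((∀ i ∈ J, ∀ j ∈ J, (d : ℤ) ∣ a i - a j) ∨
          ¬ ((d : ℤ) ∣ ∑ j ∈ J, a j)) := by
  classical
  set b : Fin n → ZMod d := fun i => ((a i : ℤ) : ZMod d) with hb
  have h2q : 2 * q ≤ n := by
    rw [hn]; exact Nat.mul_le_mul_right q hm
  have hqn : q ≤ n := by omega
  have hq1n : q + 1 ≤ n := by omega
  set S : ZMod d := ∑ i, b i with hS_def
  have hcomp : ∀ I : Finset (Fin n), ∑ i ∈ Iᶜ, b i = S - ∑ i ∈ I, b i := by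
    intro I
    exact eq_sub_of_add_eq (Finset.sum_compl_add_sum I b)
  have keyd : ∀ J : Finset (Fin n), ((d : ℤ) ∣ ∑ j ∈ J, a j) ↔ (∑ j ∈ J, b j) = 0 := by
    intro J
    rw [← ZMod.intCast_zmod_eq_zero_iff_dvd, Int.cast_sum]
  have keyc : ∀ i j : Fin n, ((d : ℤ) ∣ a i - a j) ↔ b i = b j := by
    intro i j
    rw [← ZMod.intCast_zmod_eq_zero_iff_dvd, Int.cast_sub, sub_eq_zero]
  have pick : ∀ u v : Fin n, u ≠ v → ∃ I : Finset (Fin n), I.card = q ∧ u ∈ I ∧ v ∉ I := by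
    intro u v huv
    have hmem : u ∈ (Finset.univ : Finset (Fin n)).erase v :=
      Finset.mem_erase.2 ⟨huv, Finset.mem_univ u⟩
    have hcard : q - 1 ≤ (((Finset.univ : Finset (Fin n)).erase v).erase u).card := by
      rw [Finset.card_erase_of_mem hmem, Finset.card_erase_of_mem (Finset.mem_univ v),
        Finset.card_univ, Fintype.card_fin]
      omega
    obtain ⟨T, hTsub, hTcard⟩ := Finset.exists_subset_card_eq hcard
    have huT : u ∉ T := fun h => (Finset.mem_erase.1 (hTsub h)).1 rfl
    refine ⟨insert u T, ?_, Finset.mem_insert_self u T, ?_⟩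
    · rw [Finset.card_insert_of_notMem huT, hTcard]; omega
    · intro h
      rcases Finset.mem_insert.1 h with h | h
      · exact huv h.symm
      · exact (Finset.mem_erase.1 (Finset.mem_of_mem_erase (hTsub h))).1 rfl
  have swap : ∀ (I : Finset (Fin n)) (i j : Fin n), i ∈ I → j ∉ I →
      ∃ I' : Finset (Fin n), I'.card = I.card ∧
        ∑ k ∈ I', b k = ∑ k ∈ I, b k + (b j - b i) := by
    intro I i j hi hj
    have hne : j ∉ I.erase i := fun h => hj (Finset.mem_of_mem_erase h)
    have h1 : 1 ≤ I.card := Finset.card_pos.2 ⟨i, hi⟩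
    refine ⟨insert j (I.erase i), ?_, ?_⟩
    · rw [Finset.card_insert_of_notMem hne, Finset.card_erase_of_mem hi]; omega
    · rw [Finset.sum_insert hne, Finset.sum_erase_eq_sub hi]; ring
  obtain ⟨I, hIcard, hI1, hI2⟩ :
      ∃ I : Finset (Fin n), I.card = q ∧
        ((∀ i ∈ I, ∀ j ∈ I, b i = b j) ∨ (∑ j ∈ I, b j) ≠ 0) ∧
        ((∀ i ∈ Iᶜ, ∀ j ∈ Iᶜ, b i = b j) ∨ (∑ j ∈ Iᶜ, b j) ≠ 0) := by
    by_cases hS : S = 0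
    · by_cases hA : ∀ i j : Fin n, b i = b j
      · obtain ⟨I, -, hIc⟩ := Finset.exists_subset_card_eq
          (show q ≤ (Finset.univ : Finset (Fin n)).card by
            rw [Finset.card_univ, Fintype.card_fin]; exact hqn)
        exact ⟨I, hIc, Or.inl fun i _ j _ => hA i j, Or.inl fun i _ j _ => hA i j⟩
      · push_neg at hA
        obtain ⟨u, v, huv⟩ := hA
        obtain ⟨I0, hI0c, hu, hv⟩ := pick u v (fun h => huv (by rw [h]))
        by_cases h0 : ∑ k ∈ I0, b k = 0
        · obtain ⟨I1, hI1c, hI1s⟩ := swap I0 u v hu hv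
          have hs : ∑ k ∈ I1, b k ≠ 0 := by
            rw [hI1s, h0, zero_add]
            exact sub_ne_zero.2 (Ne.symm huv)
          exact ⟨I1, hI1c.trans hI0c, Or.inr hs,
            Or.inr (by rw [hcomp, hS, zero_sub]; exact neg_ne_zero.2 hs)⟩
        · exact ⟨I0, hI0c, Or.inr h0,
            Or.inr (by rw [hcomp, hS, zero_sub]; exact neg_ne_zero.2 h0)⟩
    · by_cases hbig : ∃ r : ZMod d,
          q ≤ (Finset.univ.filter (fun i => b i = r)).card
      · obtain ⟨r, hr⟩ := hbig
        obtain ⟨I, hIsub, hIc⟩ := Finset.exists_subset_card_eq hr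
        have hhom : ∀ i ∈ I, b i = r := fun i hi => (Finset.mem_filter.1 (hIsub hi)).2
        have hsum : ∑ k ∈ I, b k = 0 := by
          calc ∑ k ∈ I, b k = ∑ _k ∈ I, r := Finset.sum_congr rfl hhom
            _ = I.card • r := Finset.sum_const r
            _ = 0 := by
                rw [hIc, nsmul_eq_mul, (ZMod.natCast_eq_zero_iff q d).2 hdq, zero_mul]
        exact ⟨I, hIc, Or.inl fun i hi j hj => (hhom i hi).trans (hhom j hj).symm,
          Or.inr (by rw [hcomp, hsum, sub_zero]; exact hS)⟩
      · push_neg at hbig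
        by_cases hex : ∃ I : Finset (Fin n), I.card = q ∧
            (∑ k ∈ I, b k) ≠ 0 ∧ (∑ k ∈ I, b k) ≠ S
        · obtain ⟨I, h1, h2, h3⟩ := hex
          exact ⟨I, h1, Or.inr h2,
            Or.inr (by rw [hcomp]; exact sub_ne_zero.2 (Ne.symm h3))⟩
        · exfalso
          push_neg at hex
          have hex' : ∀ I : Finset (Fin n), I.card = q →
              (∑ k ∈ I, b k) = 0 ∨ (∑ k ∈ I, b k) = S := by
            intro I hI
            by_cases h : (∑ k ∈ I, b k) = 0
            · exact Or.inl h
            · exact Or.inr (hex I hI h)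
          have hn0 : 0 < n := by omega
          set i0 : Fin n := ⟨0, hn0⟩ with hi0_def
          have hvex : ∃ v : Fin n, b v ≠ b i0 := by
            by_contra hc
            push_neg at hc
            have heq : Finset.univ.filter (fun i => b i = b i0) = Finset.univ :=
              Finset.filter_true_of_mem (fun x _ => hc x)
            have hle := hbig (b i0)
            rw [heq, Finset.card_univ, Fintype.card_fin] at hle
            omega
          obtain ⟨v0, hv0⟩ := hvex
          obtain ⟨Ia, hIac, hua, hva⟩ := pick v0 i0 (fun h => hv0 (by rw [h]))
          obtain ⟨I0, hI0c, hI0s⟩ :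
              ∃ I0 : Finset (Fin n), I0.card = q ∧ ∑ k ∈ I0, b k = 0 := by
            rcases hex' Ia hIac with h | h
            · exact ⟨Ia, hIac, h⟩
            · obtain ⟨Ib, hIbc, hIbs⟩ := swap Ia v0 i0 hua hva
              rcases hex' Ib (hIbc.trans hIac) with h' | h'
              · exact ⟨Ib, hIbc.trans hIac, h'⟩
              · exfalso
                rw [hIbs, h] at h'
                have : b i0 - b v0 = 0 := by
                  have := add_eq_left.1 h'
                  exact this
                exact hv0 (sub_eq_zero.1 this).symm
          have hswap : ∀ j ∉ I0, ∀ i ∈ I0, b j - b i = 0 ∨ b j - b i = S := by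
            intro j hj i hi
            obtain ⟨I', hc', hs'⟩ := swap I0 i j hi hj
            rcases hex' I' (hc'.trans hI0c) with h | h <;>
              rw [hs', hI0s, zero_add] at h
            · exact Or.inl h
            · exact Or.inr h
          have hI0ne : I0.Nonempty := Finset.card_pos.1 (by rw [hI0c]; exact hq)
          have hjex : ∃ j : Fin n, j ∉ I0 := by
            have : I0ᶜ.Nonempty := Finset.card_pos.1 (by
              rw [Finset.card_compl, hI0c, Fintype.card_fin]; omega)
            obtain ⟨j, hj⟩ := this
            exact ⟨j, Finset.mem_compl.1 hj⟩
          obtain ⟨j00, hj00⟩ := hjex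
          by_cases hIhom : ∀ i ∈ I0, ∀ i' ∈ I0, b i = b i'
          · obtain ⟨i00, hi00⟩ := hI0ne
            have hsub : I0 ⊆ Finset.univ.filter (fun x => b x = b i00) :=
              fun x hx => Finset.mem_filter.2 ⟨Finset.mem_univ x, hIhom x hx i00 hi00⟩
            have := Finset.card_le_card hsub
            rw [hI0c] at this
            exact absurd this (not_le.2 (hbig _))
          · push_neg at hIhom
            obtain ⟨i, hi, i', hi', hii'⟩ := hIhom
            have hout : ∀ j ∉ I0, b j = b i ∨ b j = b i' := by
              intro j hj
              rcases hswap j hj i hi with h1 | h1 <;> rcases hswap j hj i' hi' with h2 | h2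
              · exact Or.inl (sub_eq_zero.1 h1)
              · exact Or.inl (sub_eq_zero.1 h1)
              · exact Or.inr (sub_eq_zero.1 h2)
              · exfalso
                apply hii'
                have e1 : b i = b j - S := by rw [← h1]; ring
                have e2 : b i' = b j - S := by rw [← h2]; ring
                rw [e1, e2]
            have hall : ∀ k : Fin n, b k = b i ∨ b k = b i' := by
              intro k
              by_cases hk : k ∈ I0
              · rcases hout j00 hj00 with hj | hj
                · -- b j00 = b i, so b i - b i' = S
                  have hS' : b i - b i' = S := by
                    rcases hswap j00 hj00 i' hi' with h | h
                    · exact absurd ((sub_eq_zero.1 h).symm.trans hj) (Ne.symm hii')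
                    · rw [← h, hj]
                  rcases hswap j00 hj00 k hk with h | h
                  · exact Or.inl ((sub_eq_zero.1 h).symm.trans hj)
                  · right
                    have : b k = b j00 - S := by rw [← h]; ring
                    rw [this, hj, ← hS']; ring
                · -- b j00 = b i', so b i' - b i = S
                  have hS' : b i' - b i = S := by
                    rcases hswap j00 hj00 i hi with h | h
                    · exact absurd ((sub_eq_zero.1 h).symm.trans hj).symm (Ne.symm hii')
                    · rw [← h, hj]
                  rcases hswap j00 hj00 k hk with h | h
                  · exact Or.inr ((sub_eq_zero.1 h).symm.trans hj)
                  · left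
                    have : b k = b j00 - S := by rw [← h]; ring
                    rw [this, hj, ← hS']; ring
              · exact hout k hk
            have hsub : (Finset.univ : Finset (Fin n)) ⊆
                Finset.univ.filter (fun x => b x = b i) ∪
                  Finset.univ.filter (fun x => b x = b i') := by
              intro k _
              rcases hall k with h | h
              · exact Finset.mem_union_left _ (Finset.mem_filter.2 ⟨Finset.mem_univ k, h⟩)
              · exact Finset.mem_union_right _ (Finset.mem_filter.2 ⟨Finset.mem_univ k, h⟩)
            have hcards := Finset.card_le_card hsub
            have hun := Finset.card_union_le (Finset.univ.filter (fun x => b x = b i))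
              (Finset.univ.filter (fun x => b x = b i'))
            rw [Finset.card_univ, Fintype.card_fin] at hcards
            have hb1 := hbig (b i)
            have hb2 := hbig (b i')
            omega
  refine ⟨I, hIcard, ?_⟩
  rintro J (rfl | rfl)
  · rcases hI1 with h | h
    · exact Or.inl fun i hi j hj => (keyc i j).2 (h i hi j hj)
    · exact Or.inr fun hdvd => h ((keyd _).1 hdvd)
  · rcases hI2 with h | h
    · exact Or.inl fun i hi j hj => (keyc i j).2 (h i hi j hj)
    · exact Or.inr fun hdvd => h ((keyd _).1 hdvd)
end

section
/- Let d and n be positive integers, let a_1, ..., a_n be integers, let I_0 be a nonempty proper subset of {1, ..., n}, and let b be an integer. Suppose that for every i ∈ I_0 and every j ∈ {1, ..., n} \ I_0, the difference a_j − a_i is congruent to 0 or to b modulo d. Then the residues a_1 mod d, ..., a_n mod d take at most 2 distinct values; that is, the set {a_k mod d : k ∈ {1, ..., n}} has at most 2 elements. -/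
/-- Let `d, n ≥ 1`, let `a 1, ..., a n` be integers, let `I₀` be a nonempty proper
subset of `{1, ..., n}`, and let `b` be an integer.  If for every `i ∈ I₀` and every
`j ∈ {1, ..., n} \ I₀` the difference `a j - a i` is congruent to `0` or `b` mod `d`,
then the residues `a k mod d` for `k ∈ {1, ..., n}` take at most `2` distinct values. -/
theorem stmt_7 (d n : ℕ) (hd : 0 < d) (hn : 0 < n) (a : ℕ → ℤ)
    (I₀ : Finset ℕ) (hsub : I₀ ⊆ Finset.Icc 1 n) (hne : I₀.Nonempty)
    (hproper : I₀ ≠ Finset.Icc 1 n) (b : ℤ)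
    (h : ∀ i ∈ I₀, ∀ j ∈ Finset.Icc 1 n \ I₀,
      (d : ℤ) ∣ (a j - a i) ∨ (d : ℤ) ∣ (a j - a i - b)) :
    ((Finset.Icc 1 n).image fun k => a k % (d : ℤ)).card ≤ 2 := by
  have key : ∀ u v : ℤ, (d : ℤ) ∣ v - u → u % d = v % d := by
    intro u v huv
    exact Int.modEq_iff_dvd.mpr huv
  have key2 : ∀ u v : ℤ, u % d = v % d → (d : ℤ) ∣ v - u := by
    intro u v huv
    exact Int.modEq_iff_dvd.mp huv
  obtain ⟨i0, hi0⟩ := hne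
  obtain ⟨j0, hj0, hj0n⟩ := Finset.exists_of_ssubset (hsub.ssubset_of_ne hproper)
  have hj0' : j0 ∈ Finset.Icc 1 n \ I₀ := Finset.mem_sdiff.mpr ⟨hj0, hj0n⟩
  -- every element of I₀ has residue a j0 or a j0 - b
  have hI : ∀ i ∈ I₀, a i % d = a j0 % d ∨ a i % d = (a j0 - b) % d := by
    intro i hi
    rcases h i hi j0 hj0' with hc | hc
    · exact Or.inl (key _ _ hc)
    · refine Or.inr (key _ _ ?_)
      convert hc using 1; ring
  suffices hS : ∃ x y : ℤ, ∀ k ∈ Finset.Icc 1 n, a k % d = x ∨ a k % d = y by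
    obtain ⟨x, y, hxy⟩ := hS
    calc ((Finset.Icc 1 n).image fun k => a k % (d : ℤ)).card
        ≤ ({x, y} : Finset ℤ).card := by
          apply Finset.card_le_card
          intro r hr
          simp only [Finset.mem_image] at hr
          obtain ⟨k, hk, rfl⟩ := hr
          simp only [Finset.mem_insert, Finset.mem_singleton]
          exact hxy k hk
      _ ≤ 2 := Finset.card_le_two
  by_cases hall : ∀ i ∈ I₀, a i % d = a j0 % d
  · -- all of I₀ has residue a j0; outside residues are a i0 or a i0 + b
    refine ⟨a j0 % d, (a i0 + b) % d, fun k hk => ?_⟩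
    by_cases hkI : k ∈ I₀
    · exact Or.inl (hall k hkI)
    · rcases h i0 hi0 k (Finset.mem_sdiff.mpr ⟨hk, hkI⟩) with hc | hc
      · exact Or.inl (by rw [← hall i0 hi0]; exact (key _ _ hc).symm)
      · refine Or.inr (key _ _ ?_).symm
        convert hc using 1; ring
  · push_neg at hall
    obtain ⟨i1, hi1, hi1ne⟩ := hall
    have hi1r : a i1 % d = (a j0 - b) % d := (hI i1 hi1).resolve_left hi1ne
    refine ⟨a j0 % d, (a j0 - b) % d, fun k hk => ?_⟩
    by_cases hkI : k ∈ I₀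
    · exact hI k hkI
    · rcases h i1 hi1 k (Finset.mem_sdiff.mpr ⟨hk, hkI⟩) with hc | hc
      · exact Or.inr (by rw [← hi1r]; exact (key _ _ hc).symm)
      · -- d ∣ a k - a i1 - b and d ∣ (a j0 - b) - a i1, so d ∣ a k - a j0... 
        have h2 := key2 _ _ hi1r
        have : (d : ℤ) ∣ a j0 - a k := by
          have := dvd_sub h2 hc
          have e : a j0 - a k = (a j0 - b - a i1) - (a k - a i1 - b) := by ring
          rw [e]; exact this
        exact Or.inl (key _ _ this)
end
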